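/- arXiv:2307.03989 — 2 statements merged into one kernel-verified Lean document; each statement's English description precedes it below -/
import Mathlib

section
/- Let 𝔲 be a C¹ solution of ∂ₜ𝔲 − Σᵢ 𝔞ᵢ∂_{yᵢ}𝔲 = −i𝔅𝔲 with 𝔟 := i𝔞₁𝔞₂𝔞₃, where the 𝔞ᵢ satisfy the standard relations and 𝔅 is self-adjoint and commutes with each 𝔞ᵢ. Then ∂ₜ(𝔲†𝔟𝔲) − Σᵢ ∂_{yᵢ}(𝔲†𝔟𝔞ᵢ𝔲) = 0. -/
open Matrix

/-- Partial derivative in the time variable. -/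
noncomputable def pt {α : Type*} [NormedAddCommGroup α] [NormedSpace ℝ α]
    (f : ℝ → ℝ → ℝ → ℝ → α) (t y1 y2 y3 : ℝ) : α :=
  deriv (fun s => f s y1 y2 y3) t

/-- Partial derivative in the first space variable. -/
noncomputable def p1 {α : Type*} [NormedAddCommGroup α] [NormedSpace ℝ α]
    (f : ℝ → ℝ → ℝ → ℝ → α) (t y1 y2 y3 : ℝ) : α :=
  deriv (fun s => f t s y2 y3) y1

/-- Partial derivative in the second space variable. -/
noncomputable def p2 {α : Type*} [NormedAddCommGroup α] [NormedSpace ℝ α]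
    (f : ℝ → ℝ → ℝ → ℝ → α) (t y1 y2 y3 : ℝ) : α :=
  deriv (fun s => f t y1 s y3) y2

/-- Partial derivative in the third space variable. -/
noncomputable def p3 {α : Type*} [NormedAddCommGroup α] [NormedSpace ℝ α]
    (f : ℝ → ℝ → ℝ → ℝ → α) (t y1 y2 y3 : ℝ) : α :=
  deriv (fun s => f t y1 y2 s) y3

lemma quad_hasDerivAt (M : Matrix (Fin 4) (Fin 4) ℂ) (f : ℝ → Fin 4 → ℂ) (f' : Fin 4 → ℂ)
    (x : ℝ) (hf : HasDerivAt f f' x) :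
    HasDerivAt (fun s => star (f s) ⬝ᵥ M.mulVec (f s))
      (star f' ⬝ᵥ M.mulVec (f x) + star (f x) ⬝ᵥ M.mulVec f') x := by
  have hc : ∀ j, HasDerivAt (fun s => f s j) (f' j) x := fun j => hasDerivAt_pi.mp hf j
  simp only [dotProduct, mulVec, Pi.star_apply]
  have h : ∀ j ∈ Finset.univ, HasDerivAt (fun s => star (f s j) * ∑ k, M j k * f s k)
      (star (f' j) * ∑ k, M j k * f x k + star (f x j) * ∑ k, M j k * f' k) x := by
    intro j _
    exact (hc j).star.mul (HasDerivAt.fun_sum fun k _ => (hc k).const_mul (M j k))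
  have := HasDerivAt.fun_sum h
  convert this using 1
  · rfl
  rw [Finset.sum_add_distrib]

/-- ∂ₜ(𝔲†𝔟𝔲) − Σᵢ ∂_{yᵢ}(𝔲†𝔟𝔞ᵢ𝔲) = 0, with 𝔟 = i𝔞₁𝔞₂𝔞₃. -/
theorem dirac_b_conservation (a : Fin 3 → Matrix (Fin 4) (Fin 4) ℂ)
    (hsa : ∀ i, (a i)ᴴ = a i)
    (hsq : ∀ i, a i * a i = 1)
    (hanti : ∀ i j, i ≠ j → a i * a j = -(a j * a i))
    (B : ℝ → ℝ → ℝ → ℝ → Matrix (Fin 4) (Fin 4) ℂ)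
    (hB : ∀ t y1 y2 y3, (B t y1 y2 y3)ᴴ = B t y1 y2 y3)
    (hBcomm : ∀ i t y1 y2 y3, a i * B t y1 y2 y3 = B t y1 y2 y3 * a i)
    (u : ℝ → ℝ → ℝ → ℝ → (Fin 4 → ℂ))
    (hu : ContDiff ℝ 1 (fun p : ℝ × ℝ × ℝ × ℝ => u p.1 p.2.1 p.2.2.1 p.2.2.2))
    (hdirac : ∀ t y1 y2 y3,
      pt u t y1 y2 y3 - (a 0).mulVec (p1 u t y1 y2 y3) - (a 1).mulVec (p2 u t y1 y2 y3)
          - (a 2).mulVec (p3 u t y1 y2 y3)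
        = (-Complex.I) • (B t y1 y2 y3).mulVec (u t y1 y2 y3))
    (b : Matrix (Fin 4) (Fin 4) ℂ) (hbdef : b = Complex.I • (a 0 * a 1 * a 2)) :
    ∀ t y1 y2 y3,
      pt (fun t y1 y2 y3 => star (u t y1 y2 y3) ⬝ᵥ b.mulVec (u t y1 y2 y3)) t y1 y2 y3
        - p1 (fun t y1 y2 y3 => star (u t y1 y2 y3) ⬝ᵥ (b * a 0).mulVec (u t y1 y2 y3)) t y1 y2 y3
        - p2 (fun t y1 y2 y3 => star (u t y1 y2 y3) ⬝ᵥ (b * a 1).mulVec (u t y1 y2 y3)) t y1 y2 y3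
        - p3 (fun t y1 y2 y3 => star (u t y1 y2 y3) ⬝ᵥ (b * a 2).mulVec (u t y1 y2 y3)) t y1 y2 y3
        = 0 := by
  -- algebraic commutation lemmas
  have hswap : ∀ (i j : Fin 3), i ≠ j → ∀ x : Matrix (Fin 4) (Fin 4) ℂ,
      a i * (a j * x) = -(a j * (a i * x)) := by
    intro i j hij x
    rw [← mul_assoc, hanti i j hij, neg_mul, mul_assoc]
  have hsq' : ∀ (i : Fin 3) (x : Matrix (Fin 4) (Fin 4) ℂ), a i * (a i * x) = x := by
    intro i x; rw [← mul_assoc, hsq, one_mul]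
  have key : ∀ (i : Fin 3) (x : Matrix (Fin 4) (Fin 4) ℂ),
      a i * (a 0 * (a 1 * (a 2 * x))) = a 0 * (a 1 * (a 2 * (a i * x))) := by
    intro i x
    have h3 : i = 0 ∨ i = 1 ∨ i = 2 := by omega
    rcases h3 with rfl | rfl | rfl
    · rw [hsq' 0, hswap 2 0 (by decide), mul_neg, mul_neg, hswap 1 0 (by decide), mul_neg,
        neg_neg, hsq' 0]
    · rw [hswap 1 0 (by decide), hswap 2 1 (by decide), mul_neg, mul_neg, hsq' 1]
    · simp only [hswap 2 0 (by decide), hswap 2 1 (by decide), mul_neg, neg_neg]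
  have hab : ∀ i, a i * b = b * a i := by
    intro i
    rw [hbdef, Matrix.mul_smul, Matrix.smul_mul]
    congr 1
    have := key i 1
    simp only [mul_one] at this
    simp only [mul_assoc]
    rw [this]
  have hBc' : ∀ (i : Fin 3) (t y1 y2 y3 : ℝ) (x : Matrix (Fin 4) (Fin 4) ℂ),
      B t y1 y2 y3 * (a i * x) = a i * (B t y1 y2 y3 * x) := by
    intro i t y1 y2 y3 x
    rw [← mul_assoc, ← hBcomm, mul_assoc]
  have hBb : ∀ t y1 y2 y3, B t y1 y2 y3 * b = b * B t y1 y2 y3 := by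
    intro t y1 y2 y3
    rw [hbdef, Matrix.mul_smul, Matrix.smul_mul]
    congr 1
    simp only [mul_assoc]
    rw [hBc' 0, hBc' 1, ← hBcomm 2]
  intro t y1 y2 y3
  -- differentiability of slices
  have hud : Differentiable ℝ (fun p : ℝ × ℝ × ℝ × ℝ => u p.1 p.2.1 p.2.2.1 p.2.2.2) :=
    hu.differentiable one_ne_zero
  have h0 : HasDerivAt (fun s => u s y1 y2 y3) (pt u t y1 y2 y3) t := by
    have : DifferentiableAt ℝ (fun s => u s y1 y2 y3) t := by
      have heq : (fun s => u s y1 y2 y3) = (fun p : ℝ × ℝ × ℝ × ℝ => u p.1 p.2.1 p.2.2.1 p.2.2.2) ∘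
          (fun s : ℝ => (s, y1, y2, y3)) := rfl
      rw [heq]
      exact (hud (t, y1, y2, y3)).comp t (by fun_prop)
    exact this.hasDerivAt
  have h1 : HasDerivAt (fun s => u t s y2 y3) (p1 u t y1 y2 y3) y1 := by
    have : DifferentiableAt ℝ (fun s => u t s y2 y3) y1 := by
      have heq : (fun s => u t s y2 y3) = (fun p : ℝ × ℝ × ℝ × ℝ => u p.1 p.2.1 p.2.2.1 p.2.2.2) ∘
          (fun s : ℝ => (t, s, y2, y3)) := rfl
      rw [heq]
      exact (hud (t, y1, y2, y3)).comp y1 (by fun_prop)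
    exact this.hasDerivAt
  have h2 : HasDerivAt (fun s => u t y1 s y3) (p2 u t y1 y2 y3) y2 := by
    have : DifferentiableAt ℝ (fun s => u t y1 s y3) y2 := by
      have heq : (fun s => u t y1 s y3) = (fun p : ℝ × ℝ × ℝ × ℝ => u p.1 p.2.1 p.2.2.1 p.2.2.2) ∘
          (fun s : ℝ => (t, y1, s, y3)) := rfl
      rw [heq]
      exact (hud (t, y1, y2, y3)).comp y2 (by fun_prop)
    exact this.hasDerivAt
  have h3 : HasDerivAt (fun s => u t y1 y2 s) (p3 u t y1 y2 y3) y3 := by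
    have : DifferentiableAt ℝ (fun s => u t y1 y2 s) y3 := by
      have heq : (fun s => u t y1 y2 s) = (fun p : ℝ × ℝ × ℝ × ℝ => u p.1 p.2.1 p.2.2.1 p.2.2.2) ∘
          (fun s : ℝ => (t, y1, y2, s)) := rfl
      rw [heq]
      exact (hud (t, y1, y2, y3)).comp y3 (by fun_prop)
    exact this.hasDerivAt
  set v := u t y1 y2 y3 with hv
  set d0 := pt u t y1 y2 y3 with hd0
  set d1 := p1 u t y1 y2 y3 with hd1
  set d2 := p2 u t y1 y2 y3 with hd2
  set d3 := p3 u t y1 y2 y3 with hd3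
  have e0 : pt (fun t y1 y2 y3 => star (u t y1 y2 y3) ⬝ᵥ b.mulVec (u t y1 y2 y3)) t y1 y2 y3
      = star d0 ⬝ᵥ b.mulVec v + star v ⬝ᵥ b.mulVec d0 :=
    (quad_hasDerivAt b _ _ t h0).deriv
  have e1 : p1 (fun t y1 y2 y3 => star (u t y1 y2 y3) ⬝ᵥ (b * a 0).mulVec (u t y1 y2 y3)) t y1 y2 y3
      = star d1 ⬝ᵥ (b * a 0).mulVec v + star v ⬝ᵥ (b * a 0).mulVec d1 :=
    (quad_hasDerivAt (b * a 0) _ _ y1 h1).deriv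
  have e2 : p2 (fun t y1 y2 y3 => star (u t y1 y2 y3) ⬝ᵥ (b * a 1).mulVec (u t y1 y2 y3)) t y1 y2 y3
      = star d2 ⬝ᵥ (b * a 1).mulVec v + star v ⬝ᵥ (b * a 1).mulVec d2 :=
    (quad_hasDerivAt (b * a 1) _ _ y2 h2).deriv
  have e3 : p3 (fun t y1 y2 y3 => star (u t y1 y2 y3) ⬝ᵥ (b * a 2).mulVec (u t y1 y2 y3)) t y1 y2 y3
      = star d3 ⬝ᵥ (b * a 2).mulVec v + star v ⬝ᵥ (b * a 2).mulVec d3 :=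
    (quad_hasDerivAt (b * a 2) _ _ y3 h3).deriv
  rw [e0, e1, e2, e3]
  -- use the Dirac equation
  have hD : d0 = (a 0).mulVec d1 + (a 1).mulVec d2 + (a 2).mulVec d3
      + (-Complex.I) • (B t y1 y2 y3).mulVec v := by
    have h := hdirac t y1 y2 y3
    rw [← hv, ← hd0, ← hd1, ← hd2, ← hd3] at h
    rw [sub_sub, sub_sub, sub_eq_iff_eq_add] at h
    rw [h]; abel
  rw [hD]
  simp only [star_add, add_dotProduct, dotProduct_add, Matrix.mulVec_add, star_smul,
    smul_dotProduct, dotProduct_smul, Matrix.mulVec_smul, Matrix.star_mulVec,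
    Matrix.dotProduct_mulVec, Matrix.vecMul_vecMul, Matrix.mulVec_mulVec,
    Matrix.add_vecMul, Matrix.smul_vecMul,
    hsa, hB, hab, hBb t y1 y2 y3, smul_eq_mul, star_neg, Complex.star_def, Complex.conj_I]
  ring
end

section
/- Let ρ : ℝ × ℝ³ → (0,∞) be C¹ satisfying ∂ₜρ + div(ρv) = 0 for a C¹ vector field v with flow Φ, and let y(t,·) be a C¹ family of maps satisfying y(t, Φ(t;x)) = y₀(x) with y₀(x) := (x₁, x₂, ∫₀^{x₃} ρ(0, x₁, x₂, σ)dσ). Then det((∂y/∂x)(t, z)) = ρ(t, z) for all t and all z in the range of Φ(t;·). -/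
open Set Metric Filter Topology


/-- Divergence of a time-dependent vector field on ℝ³. -/
noncomputable def divg (v : ℝ → (Fin 3 → ℝ) → (Fin 3 → ℝ)) (t : ℝ) (z : Fin 3 → ℝ) : ℝ :=
  ∑ i, deriv (fun s => v t (Function.update z i s) i) (z i)

/-- Jacobian determinant of a map on ℝ³ at a point. -/
noncomputable def jacDet (f : (Fin 3 → ℝ) → (Fin 3 → ℝ)) (x : Fin 3 → ℝ) : ℝ :=
  LinearMap.det (fderiv ℝ f x).toLinearMap

abbrev E3 := Fin 3 → ℝ

section helpers
variable {E : Type*} [NormedAddCommGroup E] [NormedSpace ℝ E]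

lemma hasDerivWithinAt_Ici_of_Icc {f : ℝ → E} {f' : E} {a b s : ℝ} (hs : s ∈ Ico a b)
    (h : HasDerivWithinAt f f' (Icc a b) s) : HasDerivWithinAt f f' (Ici s) s := by
  refine h.mono_of_mem_nhdsWithin (mem_nhdsWithin_iff_exists_mem_nhds_inter.2
    ⟨Iic b, Iic_mem_nhds hs.2, ?_⟩)
  rintro t ⟨h1, h2⟩
  exact ⟨le_trans hs.1 h2, h1⟩

variable [CompleteSpace E]

lemma linear_ode_exists (G : ℝ → E →L[ℝ] E) (hG : Continuous G) {b : ℝ} (hb : 0 ≤ b) (ξ : E) :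
    ∃ f : ℝ → E, f 0 = ξ ∧ ∀ s ∈ Icc 0 b, HasDerivWithinAt f (G s (f s)) (Icc 0 b) s := by
  -- bound on ‖G‖ over [0, b]
  obtain ⟨K0, hK0⟩ : ∃ K0 : ℝ, ∀ s ∈ Icc (0:ℝ) b, ‖G s‖ ≤ K0 :=
    (isCompact_Icc (a := (0:ℝ)) (b := b)).exists_bound_of_continuousOn hG.continuousOn
  set Kr : ℝ := max K0 0 + 1 with hKr
  have hKrpos : 0 < Kr := by positivity
  have hKb : ∀ s ∈ Icc (0:ℝ) b, ‖G s‖ ≤ Kr := fun s hs =>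
    le_trans (le_trans (hK0 s hs) (le_max_left _ _)) (by linarith)
  set a : ℝ := (2 * Kr)⁻¹ with ha
  have hapos : 0 < a := by positivity
  -- inductive construction
  have main : ∀ n : ℕ, ∃ f : ℝ → E, f 0 = ξ ∧ ∀ s ∈ Icc 0 (min b (n * a)),
      HasDerivWithinAt f (G s (f s)) (Icc 0 (min b (n * a))) s := by
    intro n
    induction n with
    | zero =>
      refine ⟨fun _ => ξ, rfl, ?_⟩
      intro s hs
      have h0 : min b ((0:ℕ) * a) = 0 := by simp [hb]
      rw [h0] at hs ⊢
      have hs0 : s = 0 := le_antisymm (by simpa using hs.2) hs.1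
      subst hs0
      rw [hasDerivWithinAt_iff_tendsto_slope]
      have : Icc (0:ℝ) 0 \ {0} = ∅ := by
        ext t; simp +contextual [le_antisymm_iff, and_comm]
      rw [this]
      simp
    | succ n ih =>
      obtain ⟨f, hf0, hf⟩ := ih
      set c : ℝ := min b (n * a) with hc
      have hc0 : 0 ≤ c := le_min hb (by positivity)
      by_cases hcb : b ≤ c
      · -- already done
        have hcb' : c = b := le_antisymm (min_le_left _ _) hcb
        have : min b ((n+1 : ℕ) * a) = b := by
          apply min_eq_left
          have : (n:ℝ) * a ≥ b := by
            rcases min_eq_iff.1 hc.symm with h | h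
            · push_cast; nlinarith [hapos]
            · linarith [h.1]
          push_cast; nlinarith [hapos]
        rw [this, ← hcb']
        exact ⟨f, hf0, hf⟩
      push_neg at hcb
      have hble : (n:ℝ) * a ≤ b := by
        by_contra h
        push_neg at h
        have hcb' : c = b := by rw [hc, min_eq_left h.le]
        exact absurd hcb' (ne_of_lt hcb)
      have hna : c = n * a := by rw [hc, min_eq_right hble]
      set d : ℝ := min b (c + a) with hd
      have hcd : c < d := lt_min hcb (by linarith)
      have hdb : d ≤ b := min_le_left _ _
      have hdca : d - c ≤ a := by
        have := min_le_right b (c + a); linarith [hd ▸ this]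
      -- Picard–Lindelöf on [c, d]
      have hpl : IsPicardLindelof (fun t w => G t w) (tmin := c) (tmax := d) ⟨c, le_refl c, hcd.le⟩
          (f c) ⟨‖f c‖ + 1, by positivity⟩ 0 ⟨Kr * (2 * ‖f c‖ + 1), by positivity⟩
          ⟨Kr, hKrpos.le⟩ := by
        constructor
        · intro t ht
          have : ‖G t‖₊ ≤ (⟨Kr, hKrpos.le⟩ : NNReal) := by
            exact NNReal.coe_le_coe.1 (hKb t ⟨le_trans hc0 ht.1, le_trans ht.2 hdb⟩)
          exact ((G t).lipschitz.weaken this).lipschitzOnWith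
        · intro w _
          exact (hG.clm_apply continuous_const).continuousOn
        · intro t ht w hw
          show ‖G t w‖ ≤ Kr * (2 * ‖f c‖ + 1)
          have h1 : ‖w‖ ≤ 2 * ‖f c‖ + 1 := by
            have h2 : ‖w - f c‖ ≤ ‖f c‖ + 1 := mem_closedBall_iff_norm.1 hw
            have h3 : ‖w‖ ≤ ‖f c‖ + ‖w - f c‖ := by
              calc ‖w‖ = ‖f c + (w - f c)‖ := by rw [add_sub_cancel]
                _ ≤ ‖f c‖ + ‖w - f c‖ := norm_add_le _ _
            nlinarith [norm_nonneg (w - f c), norm_nonneg (f c)]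
          calc ‖G t w‖ ≤ ‖G t‖ * ‖w‖ := (G t).le_opNorm w
            _ ≤ Kr * (2 * ‖f c‖ + 1) := by
                apply mul_le_mul (hKb t ⟨le_trans hc0 ht.1, le_trans ht.2 hdb⟩) h1
                  (norm_nonneg w) hKrpos.le
        · have hmax : max (d - c) (c - c) = d - c := by
            rw [max_eq_left]; linarith
          show Kr * (2 * ‖f c‖ + 1) * max (d - c) (c - c) ≤ ‖f c‖ + 1 - ((0:NNReal):ℝ)
          rw [NNReal.coe_zero, sub_zero]
          rw [hmax]
          calc Kr * (2 * ‖f c‖ + 1) * (d - c) ≤ Kr * (2 * ‖f c‖ + 1) * a := by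
                apply mul_le_mul_of_nonneg_left hdca; positivity
            _ = (2 * ‖f c‖ + 1) / 2 := by rw [ha]; field_simp
            _ ≤ ‖f c‖ + 1 := by nlinarith [norm_nonneg (f c)]
      obtain ⟨g, hgc0, hg⟩ := hpl.exists_eq_forall_mem_Icc_hasDerivWithinAt₀
      have hgc : g c = f c := hgc0
      -- glue
      set F : ℝ → E := fun s => if s ≤ c then f s else g s with hF
      have hFdef : ∀ t, F t = if t ≤ c then f t else g t := fun _ => rfl
      have hFf : ∀ t ∈ Icc (0:ℝ) c, F t = f t := fun t ht => by rw [hFdef, if_pos ht.2]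
      have hFg : ∀ t ∈ Icc c d, F t = g t := by
        intro t ht
        rw [hFdef]
        by_cases h : t ≤ c
        · have ht' : t = c := le_antisymm h ht.1
          rw [if_pos h, ht', hgc]
        · exact if_neg h
      have hmin : min b ((n+1 : ℕ) * a) = d := by
        rw [hd, hna]; congr 1; push_cast; ring
      refine ⟨F, by rw [hFf 0 ⟨le_refl _, hc0⟩, hf0], ?_⟩
      rw [hmin]
      have hIcc : Icc (0:ℝ) c ∪ Icc c d = Icc 0 d := Icc_union_Icc_eq_Icc hc0 hcd.le
      intro s hs
      rcases lt_trichotomy s c with hsc | hsc | hsc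
      · have h1 : HasDerivWithinAt F (G s (F s)) (Icc 0 c) s := by
          have := (hf s ⟨hs.1, hsc.le⟩).congr hFf (hFf s ⟨hs.1, hsc.le⟩)
          rwa [hFf s ⟨hs.1, hsc.le⟩]
        refine h1.mono_of_mem_nhdsWithin (mem_nhdsWithin_iff_exists_mem_nhds_inter.2
          ⟨Iic c, Iic_mem_nhds hsc, ?_⟩)
        rintro t ⟨h1', h2'⟩
        exact ⟨h2'.1, h1'⟩
      · subst hsc
        have hl : HasDerivWithinAt F (G c (F c)) (Icc 0 c) c := by
          have := (hf c ⟨hs.1, le_refl _⟩).congr hFf (hFf c ⟨hs.1, le_refl _⟩)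
          rwa [hFf c ⟨hs.1, le_refl _⟩]
        have hr : HasDerivWithinAt F (G c (F c)) (Icc c d) c := by
          have h2 := (hg c ⟨le_refl _, hcd.le⟩).congr hFg (hFg c ⟨le_refl _, hcd.le⟩)
          rwa [hFg c ⟨le_refl _, hcd.le⟩]
        have := hl.union hr
        rwa [hIcc] at this
      · have h1 : HasDerivWithinAt F (G s (F s)) (Icc c d) s := by
          have := (hg s ⟨hsc.le, hs.2⟩).congr hFg (hFg s ⟨hsc.le, hs.2⟩)
          rwa [hFg s ⟨hsc.le, hs.2⟩]
        refine h1.mono_of_mem_nhdsWithin (mem_nhdsWithin_iff_exists_mem_nhds_inter.2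
          ⟨Ioi c, Ioi_mem_nhds hsc, ?_⟩)
        rintro t ⟨h1', h2'⟩
        exact ⟨le_of_lt h1', h2'.2⟩
  obtain ⟨n, hn⟩ := Archimedean.arch b hapos
  have hnb : min b (n * a) = b := by
    apply min_eq_left
    simpa [nsmul_eq_mul] using hn
  obtain ⟨f, hf0, hf⟩ := main n
  rw [hnb] at hf
  exact ⟨f, hf0, hf⟩

end helpers


lemma slice_hasFDerivAt {F' : Type*} [NormedAddCommGroup F'] [NormedSpace ℝ F']
    {F : ℝ × E3 → F'} (hF : Differentiable ℝ F) (t : ℝ) (z : E3) :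
    HasFDerivAt (fun w => F (t, w))
      ((fderiv ℝ F (t, z)).comp (ContinuousLinearMap.inr ℝ ℝ E3)) z :=
  (hF (t, z)).hasFDerivAt.comp z (hasFDerivAt_prodMk_right t z)

lemma curve_hasDerivAt {F' : Type*} [NormedAddCommGroup F'] [NormedSpace ℝ F']
    {F : ℝ × E3 → F'} (hF : Differentiable ℝ F) {γ : ℝ → E3} {w : E3} {s : ℝ}
    (hγ : HasDerivAt γ w s) :
    HasDerivAt (fun τ => F (τ, γ τ)) (fderiv ℝ F (s, γ s) (1, w)) s :=
  (hF (s, γ s)).hasFDerivAt.comp_hasDerivAt s ((hasDerivAt_id s).prodMk hγ)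

lemma det3_deriv {m : Fin 3 → Fin 3 → ℝ → ℝ} {m' : Fin 3 → Fin 3 → ℝ} {S : Set ℝ} {s : ℝ}
    (h : ∀ i j, HasDerivWithinAt (m i j) (m' i j) S s)
    (Gm : Fin 3 → Fin 3 → ℝ) (hrel : ∀ i j, m' i j = ∑ k, Gm i k * m k j s) :
    HasDerivWithinAt (fun τ => (Matrix.of fun i j => m i j τ).det)
      ((Gm 0 0 + Gm 1 1 + Gm 2 2) * (Matrix.of fun i j => m i j s).det) S s := by
  have Hbig := (((((((h 0 0).mul (h 1 1)).mul (h 2 2)).sub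
      (((h 0 0).mul (h 1 2)).mul (h 2 1))).sub
      (((h 0 1).mul (h 1 0)).mul (h 2 2))).add
      (((h 0 1).mul (h 1 2)).mul (h 2 0))).add
      (((h 0 2).mul (h 1 0)).mul (h 2 1))).sub
      (((h 0 2).mul (h 1 1)).mul (h 2 0))
  have heq : (fun τ => (Matrix.of fun i j => m i j τ).det) =
      fun τ => m 0 0 τ * m 1 1 τ * m 2 2 τ - m 0 0 τ * m 1 2 τ * m 2 1 τ -
        m 0 1 τ * m 1 0 τ * m 2 2 τ + m 0 1 τ * m 1 2 τ * m 2 0 τ +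
        m 0 2 τ * m 1 0 τ * m 2 1 τ - m 0 2 τ * m 1 1 τ * m 2 0 τ := by
    funext τ; rw [Matrix.det_fin_three]; rfl
  rw [heq]
  refine Hbig.congr_deriv ?_
  rw [Matrix.det_fin_three]
  simp only [hrel, Fin.sum_univ_three, Matrix.of_apply, Pi.mul_apply]
  ring

set_option maxHeartbeats 2000000 in
lemma main_nonneg (ρ : ℝ → (Fin 3 → ℝ) → ℝ)
    (v : ℝ → (Fin 3 → ℝ) → (Fin 3 → ℝ)) (Φ : ℝ → (Fin 3 → ℝ) → (Fin 3 → ℝ))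
    (y : ℝ → (Fin 3 → ℝ) → (Fin 3 → ℝ))
    (hρ : ContDiff ℝ 1 (fun q : ℝ × (Fin 3 → ℝ) => ρ q.1 q.2))
    (hρpos : ∀ t z, 0 < ρ t z)
    (hv : ContDiff ℝ 1 (fun q : ℝ × (Fin 3 → ℝ) => v q.1 q.2))
    (hflow : ∀ t x, HasDerivAt (fun s => Φ s x) (v t (Φ t x)) t)
    (hinit : ∀ x, Φ 0 x = x)
    (hcont : ∀ t z, deriv (fun s => ρ s z) t
      + divg (fun t z => ρ t z • v t z) t z = 0)
    (hy : ContDiff ℝ 1 (fun q : ℝ × (Fin 3 → ℝ) => y q.1 q.2))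
    (hlag : ∀ t x, y t (Φ t x)
      = ![x 0, x 1, ∫ σ in (0 : ℝ)..(x 2), ρ 0 ![x 0, x 1, σ]])
    (b : ℝ) (hb : 0 ≤ b) :
    ∀ z ∈ Set.range (Φ b), jacDet (y b) z = ρ b z := by
  rintro z ⟨x, rfl⟩
  -- setup
  set γ : ℝ → E3 := fun s => Φ s x with hγdef
  have hγ : ∀ s, HasDerivAt γ (v s (γ s)) s := fun s => hflow s x
  have hγc : Continuous γ := Differentiable.continuous (fun s => (hγ s).differentiableAt)
  have hvd : Differentiable ℝ (fun q : ℝ × E3 => v q.1 q.2) := hv.differentiable one_ne_zero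
  have hρd : Differentiable ℝ (fun q : ℝ × E3 => ρ q.1 q.2) := hρ.differentiable one_ne_zero
  have hyd : Differentiable ℝ (fun q : ℝ × E3 => y q.1 q.2) := hy.differentiable one_ne_zero
  set Dv : ℝ × E3 → E3 →L[ℝ] E3 :=
    fun p => (fderiv ℝ (fun q : ℝ × E3 => v q.1 q.2) p).comp (ContinuousLinearMap.inr ℝ ℝ E3)
    with hDvdef
  have hDvc : Continuous Dv := (hv.continuous_fderiv one_ne_zero).clm_comp continuous_const
  have hvslice : ∀ t z, HasFDerivAt (v t) (Dv (t, z)) z := fun t z =>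
    (hvd (t, z)).hasFDerivAt.comp z (hasFDerivAt_prodMk_right t z)
  -- tube and bounds
  set Tub : Set E3 := Metric.cthickening 1 (γ '' Icc 0 b) with hTubdef
  set T : Set (ℝ × E3) := Icc 0 b ×ˢ Tub with hTdef
  have hTcomp : IsCompact T := (isCompact_Icc.prod
    ((isCompact_Icc.image hγc).cthickening))
  obtain ⟨K0, hK0⟩ : ∃ K0 : ℝ, ∀ p ∈ T, ‖Dv p‖ ≤ K0 :=
    hTcomp.exists_bound_of_continuousOn hDvc.continuousOn
  set Kp : NNReal := ⟨max K0 0 + 1, by positivity⟩ with hKpdef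
  have hKpc : (Kp : ℝ) = max K0 0 + 1 := rfl
  have hKppos : (0:ℝ) < Kp := by rw [hKpc]; positivity
  have hKp : ∀ p ∈ T, ‖Dv p‖ ≤ Kp := fun p hp => by
    rw [hKpc]; exact le_trans (le_trans (hK0 p hp) (le_max_left _ _)) (by linarith)
  have hmemT : ∀ s ∈ Icc (0:ℝ) b, ∀ w, dist w (γ s) ≤ 1 → (s, w) ∈ T := by
    intro s hs w hw
    exact ⟨hs, Metric.mem_cthickening_of_dist_le w (γ s) 1 _ (mem_image_of_mem γ hs) hw⟩
  -- clamped field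
  set cl : ℝ → ℝ := fun s => max 0 (min s b) with hcldef
  have hclmem : ∀ s, cl s ∈ Icc (0:ℝ) b := fun s =>
    ⟨le_max_left _ _, max_le (by linarith [min_le_right s b]) (min_le_right s b)⟩
  have hcl : ∀ s ∈ Icc (0:ℝ) b, cl s = s := fun s hs => by
    rw [hcldef]; simp only; rw [min_eq_left hs.2, max_eq_right hs.1]
  set vv : ℝ → E3 → E3 := fun τ w => v (cl τ) w with hvvdef
  set sset : ℝ → Set E3 := fun τ => Metric.closedBall (γ (cl τ)) 1 with hssetdef
  have hlip : ∀ τ, LipschitzOnWith Kp (vv τ) (sset τ) := by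
    intro τ
    apply (convex_closedBall _ _).lipschitzOnWith_of_nnnorm_hasFDerivWithin_le
      (f' := fun w => Dv (cl τ, w))
      (fun w hw => (hvslice (cl τ) w).hasFDerivWithinAt)
    intro w hw
    rw [← NNReal.coe_le_coe, coe_nnnorm]
    exact hKp _ (hmemT (cl τ) (hclmem τ) w (mem_closedBall.1 hw))
  -- Claim A : confinement
  have claimA : ∀ x' : E3, dist x' x * Real.exp (Kp * b) ≤ 1 →
      ∀ s ∈ Icc (0:ℝ) b, dist (Φ s x') (γ s) ≤ dist x' x * Real.exp ((Kp:ℝ) * s) := by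
    intro x' hx1
    have hcurve : Continuous fun τ => dist (Φ τ x') (γ τ) :=
      (Differentiable.continuous fun s => (hflow s x').differentiableAt).dist hγc
    rcases eq_or_lt_of_le (dist_nonneg (x := x') (y := x)) with hδ0 | hδ0
    · have hxx : x' = x := dist_eq_zero.1 hδ0.symm
      subst hxx
      intro s hs
      have h1 : Φ s x' = γ s := rfl
      rw [h1, dist_self]
      positivity
    · set S : Set ℝ := {c | c ∈ Icc (0:ℝ) b ∧
        ∀ τ ∈ Icc (0:ℝ) c, dist (Φ τ x') (γ τ) ≤ dist x' x * Real.exp (Kp * τ)} with hSdef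
      have h0S : (0:ℝ) ∈ S := by
        refine ⟨⟨le_refl _, hb⟩, fun τ hτ => ?_⟩
        have hτ0 : τ = 0 := le_antisymm hτ.2 hτ.1
        subst hτ0
        have h1 : Φ 0 x' = x' := hinit x'
        have h2 : γ (0:ℝ) = x := hinit x
        rw [h1, h2, mul_zero, Real.exp_zero, mul_one]
      have hSb : ∀ c ∈ S, c ≤ b := fun c hc => hc.1.2
      have hbdd : BddAbove S := ⟨b, hSb⟩
      set c' : ℝ := sSup S with hc'def
      have hc'0 : 0 ≤ c' := le_csSup hbdd h0S
      have hc'b : c' ≤ b := csSup_le ⟨0, h0S⟩ hSb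
      have hS2 : ∀ τ, 0 ≤ τ → τ < c' → dist (Φ τ x') (γ τ) ≤ dist x' x * Real.exp (Kp * τ) := by
        intro τ h0 hlt
        obtain ⟨c, hcS, hτc⟩ := exists_lt_of_lt_csSup ⟨0, h0S⟩ hlt
        exact hcS.2 τ ⟨h0, hτc.le⟩
      have hc'S : ∀ τ ∈ Icc (0:ℝ) c', dist (Φ τ x') (γ τ) ≤ dist x' x * Real.exp (Kp * τ) := by
        intro τ hτ
        rcases lt_or_eq_of_le hτ.2 with h | h
        · exact hS2 τ hτ.1 h
        · subst h
          rcases eq_or_lt_of_le hτ.1 with h0 | h0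
          · rw [← h0]
            exact h0S.2 0 ⟨le_refl _, le_refl _⟩
          · haveI hne : (𝓝[Ico (0:ℝ) c'] c').NeBot := by
              apply mem_closure_iff_nhdsWithin_neBot.1
              rw [closure_Ico (ne_of_lt h0)]
              exact ⟨h0.le, le_refl _⟩
            refine le_of_tendsto_of_tendsto (b := 𝓝[Ico (0:ℝ) c'] c')
              (hcurve.continuousAt.continuousWithinAt)
              (((continuous_const.mul ((Real.continuous_exp).comp
                (continuous_const.mul continuous_id))).continuousAt).continuousWithinAt)
              (eventually_nhdsWithin_of_forall (fun τ' hτ' => hS2 τ' hτ'.1 hτ'.2))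
      rcases eq_or_lt_of_le hc'b with hcb | hcb
      · intro s hs
        exact hc'S s ⟨hs.1, hs.2.trans_eq hcb.symm⟩
      · exfalso
        have h1lt : dist (Φ c' x') (γ c') < 1 := by
          have h2 := hc'S c' ⟨hc'0, le_refl _⟩
          have h3 : dist x' x * Real.exp (Kp * c') < dist x' x * Real.exp (Kp * b) :=
            mul_lt_mul_of_pos_left (Real.exp_lt_exp.2 (by nlinarith [hKppos])) hδ0
          linarith
        have hev : (fun τ => dist (Φ τ x') (γ τ)) ⁻¹' (Iio 1) ∈ 𝓝 c' :=
          hcurve.continuousAt (Iio_mem_nhds h1lt)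
        obtain ⟨l, r, hlr, hsub⟩ := mem_nhds_iff_exists_Ioo_subset.1 hev
        set c'' : ℝ := min b ((c' + r)/2) with hc''def
        have hc''gt : c' < c'' := lt_min hcb (by linarith [hlr.2])
        have hc''0 : 0 ≤ c'' := le_trans hc'0 hc''gt.le
        have hc''b : c'' ≤ b := min_le_left _ _
        have hc''r : c'' < r := lt_of_le_of_lt (min_le_right _ _) (by linarith [hlr.2])
        have hgron := dist_le_of_trajectories_ODE_of_mem (v := vv) (s := sset) (K := Kp)
          (fun t _ => hlip t) (a := 0) (b := c'') (f := γ) (g := fun τ => Φ τ x')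
          (hγc.continuousOn)
          (fun τ hτ => by
            rw [hvvdef]
            simp only
            rw [hcl τ ⟨hτ.1, le_trans hτ.2.le hc''b⟩]
            exact (hγ τ).hasDerivWithinAt)
          (fun τ hτ => by
            rw [hssetdef]
            simp only
            rw [hcl τ ⟨hτ.1, le_trans hτ.2.le hc''b⟩]
            exact mem_closedBall_self zero_le_one)
          ((Differentiable.continuous fun s => (hflow s x').differentiableAt).continuousOn)
          (fun τ hτ => by
            rw [hvvdef]
            simp only
            rw [hcl τ ⟨hτ.1, le_trans hτ.2.le hc''b⟩]
            exact (hflow τ x').hasDerivWithinAt)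
          (fun τ hτ => by
            rw [hssetdef]
            simp only
            rw [hcl τ ⟨hτ.1, le_trans hτ.2.le hc''b⟩, mem_closedBall]
            rcases le_or_gt τ c' with hle | hgt
            · refine le_trans (hc'S τ ⟨hτ.1, hle⟩) ?_
              refine le_trans ?_ hx1
              apply mul_le_mul_of_nonneg_left _ dist_nonneg
              exact Real.exp_le_exp.2 (mul_le_mul_of_nonneg_left
                (le_trans hτ.2.le hc''b) hKppos.le)
            · have : τ ∈ Ioo l r := ⟨lt_trans hlr.1 hgt, lt_trans hτ.2 hc''r⟩
              exact (hsub this).le)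
          (by
            show dist (γ 0) (Φ 0 x') ≤ dist x' x
            simp only [hγdef]
            rw [hinit, hinit, dist_comm])
        have hc''S : c'' ∈ S := by
          refine ⟨⟨hc''0, hc''b⟩, fun τ hτ => ?_⟩
          have := hgron τ hτ
          rw [dist_comm (γ τ), sub_zero] at this
          exact this
        exact absurd (le_csSup hbdd hc''S) (not_le.2 hc''gt)
  -- variational solutions
  set G : ℝ → E3 →L[ℝ] E3 := fun s => Dv (s, γ s) with hGdef
  have hGc : Continuous G := hDvc.comp (continuous_id.prodMk hγc)
  have hexu : ∀ i : Fin 3, ∃ u : ℝ → E3, u 0 = Pi.single i 1 ∧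
      ∀ s ∈ Icc (0:ℝ) b, HasDerivWithinAt u (G s (u s)) (Icc 0 b) s :=
    fun i => linear_ode_exists G hGc hb (Pi.single i 1)
  choose u hu0 hu using hexu
  have hTunif := hTcomp.uniformContinuousOn_of_continuous hDvc.continuousOn
  have claimB : ∀ i : Fin 3, Filter.Tendsto
      (fun h : ℝ => (h - 0)⁻¹ • (Φ b (x + h • (Pi.single i 1 : E3)) - Φ b (x + (0:ℝ) • (Pi.single i 1 : E3))))
      (𝓝[≠] 0) (𝓝 (u i b)) := by
    intro i
    set ξ : E3 := Pi.single i 1 with hξdef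
    have huc : ContinuousOn (u i) (Icc 0 b) := fun s hs => (hu i s hs).continuousWithinAt
    obtain ⟨Ru0, hRu0⟩ := (isCompact_Icc (a := (0:ℝ)) (b := b)).exists_bound_of_continuousOn
      huc.norm
    set Ru : ℝ := max Ru0 1 with hRudef
    have hRu1 : (1:ℝ) ≤ Ru := le_max_right _ _
    have hRupos : (0:ℝ) < Ru := by linarith
    have hRu : ∀ s ∈ Icc (0:ℝ) b, ‖u i s‖ ≤ Ru := fun s hs =>
      le_trans (by simpa using hRu0 s hs) (le_max_left _ _)
    rw [Metric.tendsto_nhdsWithin_nhds]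
    intro ε hε
    set eKb : ℝ := Real.exp (Kp * b) with heKbdef
    have heKb1 : (1:ℝ) ≤ eKb := Real.one_le_exp (by positivity)
    set Cb : ℝ := Ru * (eKb - 1) / Kp + 1 with hCbdef
    have hCb1 : (1:ℝ) ≤ Cb := by
      rw [hCbdef]
      have : 0 ≤ Ru * (eKb - 1) / Kp := by
        apply div_nonneg _ hKppos.le
        nlinarith
      linarith
    have hCbpos : (0:ℝ) < Cb := by linarith
    set ε'' : ℝ := ε / Cb with hε''def
    have hε''pos : 0 < ε'' := by positivity
    obtain ⟨δu, hδupos, hδu⟩ := (Metric.uniformContinuousOn_iff).1 hTunif ε'' hε''pos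
    set δ₀ : ℝ := min (δu/2) 1 with hδ₀def
    have hδ₀pos : 0 < δ₀ := lt_min (by linarith) one_pos
    have hδ₀1 : δ₀ ≤ 1 := min_le_right _ _
    set Xi : ℝ := ‖ξ‖ with hXidef
    have hXi0 : (0:ℝ) ≤ Xi := norm_nonneg _
    set δh : ℝ := min (δ₀ / Ru) (1 / (Xi * eKb + 1)) with hδhdef
    have hδhpos : 0 < δh := lt_min (by positivity) (by positivity)
    refine ⟨δh, hδhpos, ?_⟩
    intro h hh hdist
    have hne : h ≠ 0 := hh
    have habs : |h| < δh := by rwa [Real.dist_eq, sub_zero] at hdist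
    have habs0 : 0 < |h| := abs_pos.2 hne
    have hcond1 : |h| * Xi * eKb ≤ 1 := by
      have h1 : |h| ≤ 1 / (Xi * eKb + 1) := le_trans habs.le (min_le_right _ _)
      have h2 : (0:ℝ) < Xi * eKb + 1 := by positivity
      rw [le_div_iff₀ h2] at h1
      nlinarith
    have hcond2 : |h| * Ru ≤ δ₀ := by
      have h1 : |h| ≤ δ₀ / Ru := le_trans habs.le (min_le_left _ _)
      rw [le_div_iff₀ hRupos] at h1
      linarith
    set xh : E3 := x + h • ξ with hxhdef
    have hdxh : dist xh x = |h| * Xi := by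
      rw [hxhdef, dist_eq_norm, add_sub_cancel_left, norm_smul, Real.norm_eq_abs, hXidef]
    have hA1 : dist xh x * Real.exp ((Kp:ℝ) * b) ≤ 1 := by
      rw [hdxh, ← heKbdef]; exact hcond1
    have hmemf := claimA xh hA1
    have hmemf' : ∀ τ ∈ Icc (0:ℝ) b, dist (Φ τ xh) (γ τ) ≤ 1 := by
      intro τ hτ
      refine le_trans (hmemf τ hτ) ?_
      rw [hdxh]
      calc |h| * Xi * Real.exp (Kp * τ) ≤ |h| * Xi * eKb := by
            apply mul_le_mul_of_nonneg_left _ (by positivity)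
            exact Real.exp_le_exp.2 (mul_le_mul_of_nonneg_left hτ.2 hKppos.le)
        _ ≤ 1 := hcond1
    set η : ℝ → E3 := fun s => γ s + h • u i s with hηdef
    set eb : ℝ := ε'' * Ru * |h| with hebdef
    have hwnorm : ∀ τ ∈ Icc (0:ℝ) b, ‖h • u i τ‖ ≤ |h| * Ru := by
      intro τ hτ
      rw [norm_smul, Real.norm_eq_abs]
      exact mul_le_mul_of_nonneg_left (hRu τ hτ) (abs_nonneg h)
    have hwδ₀ : ∀ τ ∈ Icc (0:ℝ) b, ‖h • u i τ‖ ≤ δ₀ := fun τ hτ =>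
      le_trans (hwnorm τ hτ) hcond2
    have hgron := dist_le_of_approx_trajectories_ODE_of_mem (v := vv) (s := sset) (K := Kp)
      (fun t _ => hlip t) (a := 0) (b := b) (f := fun τ => Φ τ xh) (g := η)
      (f' := fun τ => v τ (Φ τ xh)) (g' := fun τ => v τ (γ τ) + h • (G τ (u i τ)))
      (εf := 0) (εg := eb) (δ := 0)
      ((Differentiable.continuous fun s => (hflow s xh).differentiableAt).continuousOn)
      (fun τ hτ => (hflow τ xh).hasDerivWithinAt)
      (fun τ hτ => by
        show dist (v τ (Φ τ xh)) (vv τ (Φ τ xh)) ≤ 0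
        rw [hvvdef]
        simp only
        rw [hcl τ ⟨hτ.1, hτ.2.le⟩, dist_self])
      (fun τ hτ => by
        rw [hssetdef]
        simp only
        rw [hcl τ ⟨hτ.1, hτ.2.le⟩, mem_closedBall]
        exact hmemf' τ ⟨hτ.1, hτ.2.le⟩)
      (hγc.continuousOn.add (huc.const_smul h))
      (fun τ hτ => by
        refine HasDerivWithinAt.add ((hγ τ).hasDerivWithinAt) ?_
        exact (hasDerivWithinAt_Ici_of_Icc hτ (hu i τ ⟨hτ.1, hτ.2.le⟩)).const_smul h)
      (fun τ hτ => by
        have hτb : τ ∈ Icc (0:ℝ) b := ⟨hτ.1, hτ.2.le⟩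
        show dist (v τ (γ τ) + h • (G τ (u i τ))) (vv τ (η τ)) ≤ eb
        rw [hvvdef]
        simp only
        rw [hcl τ hτb]
        have hDw : Dv (τ, γ τ) (h • u i τ) = h • (G τ (u i τ)) := by
          rw [hGdef]
          exact (Dv (τ, γ τ)).map_smul h (u i τ)
        have hbound : ∀ z ∈ closedBall (γ τ) δ₀, ‖Dv (τ, z) - Dv (τ, γ τ)‖ ≤ ε'' := by
          intro z hz
          have hzT : (τ, z) ∈ T := hmemT τ hτb z (le_trans (mem_closedBall.1 hz) hδ₀1)
          have hγT : (τ, γ τ) ∈ T := hmemT τ hτb (γ τ) (by rw [dist_self]; exact zero_le_one)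
          have hpq : dist ((τ, z) : ℝ × E3) ((τ, γ τ) : ℝ × E3) < δu := by
            rw [Prod.dist_eq]
            have h1 : dist z (γ τ) ≤ δ₀ := mem_closedBall.1 hz
            have h2 : δ₀ ≤ δu / 2 := min_le_left _ _
            have h3 : dist τ τ = 0 := dist_self τ
            rw [h3]
            exact max_lt (by linarith) (by linarith)
          have h4 := hδu _ hzT _ hγT hpq
          rw [dist_eq_norm] at h4
          exact h4.le
        have hmemy : γ τ + h • u i τ ∈ closedBall (γ τ) δ₀ := by
          rw [mem_closedBall, dist_eq_norm, add_sub_cancel_left]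
          exact hwδ₀ τ hτb
        have hkey := Convex.norm_image_sub_le_of_norm_hasFDerivWithin_le'
          (f' := fun z => Dv (τ, z)) (φ := Dv (τ, γ τ)) (f := v τ) (C := ε'')
          (s := closedBall (γ τ) δ₀)
          (fun z hz => (hvslice τ z).hasFDerivWithinAt) hbound (convex_closedBall _ _)
          (mem_closedBall_self hδ₀pos.le) hmemy
        rw [add_sub_cancel_left] at hkey
        have hrw : v τ (γ τ) + h • (G τ (u i τ)) - v τ (η τ)
            = -(v τ (γ τ + h • u i τ) - v τ (γ τ) - Dv (τ, γ τ) (h • u i τ)) := by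
          rw [← hDw, hηdef]
          simp only
          abel
        rw [dist_eq_norm, hrw, norm_neg]
        refine le_trans hkey ?_
        rw [hebdef]
        calc ε'' * ‖h • u i τ‖ ≤ ε'' * (|h| * Ru) :=
              mul_le_mul_of_nonneg_left (hwnorm τ hτb) hε''pos.le
          _ = ε'' * Ru * |h| := by ring)
      (fun τ hτ => by
        rw [hssetdef]
        simp only
        rw [hcl τ ⟨hτ.1, hτ.2.le⟩, mem_closedBall, hηdef]
        simp only
        rw [dist_eq_norm, add_sub_cancel_left]
        exact le_trans (hwδ₀ τ ⟨hτ.1, hτ.2.le⟩) hδ₀1)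
      (by
        show dist (Φ 0 xh) (η 0) ≤ 0
        rw [hηdef]
        simp only
        rw [hinit xh, hu0 i, show γ (0:ℝ) = x from hinit x, ← hξdef, ← hxhdef, dist_self])
    have hfinb := hgron b ⟨hb, le_refl b⟩
    have hKne : (Kp:ℝ) ≠ 0 := ne_of_gt hKppos
    rw [zero_add, sub_zero, gronwallBound_of_K_ne_0 hKne] at hfinb
    simp only [zero_mul, zero_add] at hfinb
    -- now convert to the slope statement
    have h2 : h⁻¹ • (Φ b xh - η b) = h⁻¹ • (Φ b xh - γ b) - u i b := by
      rw [hηdef]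
      simp only
      rw [show Φ b xh - (γ b + h • u i b) = (Φ b xh - γ b) - h • u i b from by abel,
        smul_sub, smul_smul, inv_mul_cancel₀ hne, one_smul]
    have hq : (h - 0)⁻¹ • (Φ b (x + h • ξ) - Φ b (x + (0:ℝ) • ξ)) - u i b
        = h⁻¹ • (Φ b xh - η b) := by
      simp only [hηdef, sub_zero, zero_smul, add_zero, ← hxhdef]
      rw [show Φ b x = γ b from rfl, h2]
    show dist ((h - 0)⁻¹ • (Φ b (x + h • ξ) - Φ b (x + (0:ℝ) • ξ))) (u i b) < ε
    rw [dist_eq_norm, hq, norm_smul, norm_inv, Real.norm_eq_abs]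
    have hεid : ε'' * Cb = ε := div_mul_cancel₀ ε (ne_of_gt hCbpos)
    calc |h|⁻¹ * ‖Φ b xh - η b‖ ≤ |h|⁻¹ * (eb / Kp * (Real.exp (Kp * b) - 1)) := by
          apply mul_le_mul_of_nonneg_left _ (by positivity)
          rw [← dist_eq_norm]
          exact hfinb
      _ = ε'' * (Ru * (eKb - 1) / Kp) := by
          rw [hebdef, ← heKbdef]
          field_simp
      _ = ε'' * (Cb - 1) := by rw [hCbdef]; ring_nf
      _ < ε := by nlinarith
  -- transport of derivative : A (u i b) = A₀ (single i 1)
  set A : E3 →L[ℝ] E3 := fderiv ℝ (y b) (γ b) with hAdef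
  set A₀ : E3 →L[ℝ] E3 := fderiv ℝ (y 0) x with hA0def
  have hyslice : ∀ t z, HasFDerivAt (y t) ((fderiv ℝ (fun q : ℝ × E3 => y q.1 q.2) (t, z)).comp
      (ContinuousLinearMap.inr ℝ ℝ E3)) z := fun t z =>
    (hyd (t, z)).hasFDerivAt.comp z (hasFDerivAt_prodMk_right t z)
  have hA : HasFDerivAt (y b) A (γ b) := by
    rw [hAdef, (hyslice b (γ b)).fderiv]; exact hyslice b (γ b)
  have hA₀ : HasFDerivAt (y 0) A₀ x := by
    rw [hA0def, (hyslice 0 x).fderiv]; exact hyslice 0 x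
  have hAU : ∀ i : Fin 3, A (u i b) = A₀ (Pi.single i 1) := by
    intro i
    set ξ : E3 := Pi.single i 1 with hξdef
    have hA' : HasFDerivAt (y b) A ((fun h : ℝ => Φ b (x + h • ξ)) 0) := by
      show HasFDerivAt (y b) A (Φ b (x + (0:ℝ) • ξ))
      rw [zero_smul, add_zero]
      exact hA
    have hcd : HasDerivAt (fun h : ℝ => Φ b (x + h • ξ)) (u i b) 0 := by
      rw [hasDerivAt_iff_tendsto_slope]
      have h1 : slope (fun h : ℝ => Φ b (x + h • ξ)) 0 = fun h : ℝ =>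
          (h - 0)⁻¹ • (Φ b (x + h • ξ) - Φ b (x + (0:ℝ) • ξ)) := by
        funext h
        rw [slope_def_module]
      rw [h1]
      exact claimB i
    have houter : HasDerivAt (fun h : ℝ => y b (Φ b (x + h • ξ))) (A (u i b)) 0 :=
      HasFDerivAt.comp_hasDerivAt 0 hA' hcd
    have hinner2 : HasDerivAt (fun h : ℝ => x + h • ξ) ξ 0 := by
      simpa using ((hasDerivAt_id (0:ℝ)).smul_const ξ).const_add x
    have hA₀' : HasFDerivAt (y 0) A₀ ((fun h : ℝ => x + h • ξ) 0) := by
      show HasFDerivAt (y 0) A₀ (x + (0:ℝ) • ξ)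
      rw [zero_smul, add_zero]
      exact hA₀
    have houter0 : HasDerivAt (fun h : ℝ => y 0 (x + h • ξ)) (A₀ ξ) 0 :=
      HasFDerivAt.comp_hasDerivAt 0 hA₀' hinner2
    have hfun : (fun h : ℝ => y b (Φ b (x + h • ξ))) = fun h : ℝ => y 0 (x + h • ξ) := by
      funext h
      rw [hlag b (x + h • ξ), ← hlag 0 (x + h • ξ), hinit]
    have houter' : HasDerivAt (fun h : ℝ => y 0 (x + h • ξ)) (A (u i b)) 0 := hfun ▸ houter
    exact houter'.unique houter0
  -- determinant of A₀
  have hy0 : ∀ w : E3, y 0 w = ![w 0, w 1, ∫ σ in (0:ℝ)..(w 2), ρ 0 ![w 0, w 1, σ]] := by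
    intro w
    rw [← hlag 0 w, hinit]
  have hproj : ∀ (k : Fin 3), (∀ w : E3, y 0 w k = w k) → ∀ w, A₀ w k = w k := by
    intro k hk w
    have h1 : HasFDerivAt (fun x' : E3 => y 0 x' k)
        ((ContinuousLinearMap.proj k).comp A₀) x :=
      (ContinuousLinearMap.proj (R := ℝ) (φ := fun _ : Fin 3 => ℝ) k).hasFDerivAt.comp x hA₀
    have h2 : (fun x' : E3 => y 0 x' k) = fun x' : E3 => x' k := funext fun x' => hk x'
    rw [h2] at h1
    have h4 := h1.unique
      ((ContinuousLinearMap.proj (R := ℝ) (φ := fun _ : Fin 3 => ℝ) k).hasFDerivAt (x := x))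
    exact ContinuousLinearMap.ext_iff.1 h4 w
  have hr0 : ∀ w : E3, A₀ w 0 = w 0 := by
    apply hproj 0
    intro w
    rw [hy0 w]
    simp
  have hr1 : ∀ w : E3, A₀ w 1 = w 1 := by
    apply hproj 1
    intro w
    rw [hy0 w]
    simp
  have hvecx : (![x 0, x 1, x 2] : E3) = x := by
    funext j
    fin_cases j <;> rfl
  have hent : A₀ (Pi.single 2 1) 2 = ρ 0 x := by
    set ξ : E3 := Pi.single 2 1 with hξdef
    have hinner2 : HasDerivAt (fun h : ℝ => x + h • ξ) ξ 0 := by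
      simpa using ((hasDerivAt_id (0:ℝ)).smul_const ξ).const_add x
    have hA₀' : HasFDerivAt (y 0) A₀ ((fun h : ℝ => x + h • ξ) 0) := by
      show HasFDerivAt (y 0) A₀ (x + (0:ℝ) • ξ)
      rw [zero_smul, add_zero]
      exact hA₀
    have he2 : HasDerivAt (fun h : ℝ => y 0 (x + h • ξ)) (A₀ ξ) 0 :=
      HasFDerivAt.comp_hasDerivAt 0 hA₀' hinner2
    have hcomp2 : HasDerivAt (fun h : ℝ => y 0 (x + h • ξ) 2) ((A₀ ξ) 2) 0 :=
      (hasDerivAt_pi.1 he2) 2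
    have e0 : ∀ h : ℝ, (x + h • ξ) 0 = x 0 := fun h => by
      simp [hξdef, Pi.single_apply]
    have e1 : ∀ h : ℝ, (x + h • ξ) 1 = x 1 := fun h => by
      simp [hξdef, Pi.single_apply]
    have e2 : ∀ h : ℝ, (x + h • ξ) 2 = x 2 + h := fun h => by
      simp [hξdef, Pi.single_apply, mul_comm]
    have hfun2 : (fun h : ℝ => y 0 (x + h • ξ) 2)
        = fun h : ℝ => ∫ σ in (0:ℝ)..(x 2 + h), ρ 0 ![x 0, x 1, σ] := by
      funext h
      rw [hy0 (x + h • ξ)]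
      simp only [Matrix.cons_val_two, Matrix.tail_cons, Matrix.head_cons]
      rw [e0 h, e1 h, e2 h]
    rw [hfun2] at hcomp2
    have hvec : Continuous fun σ : ℝ => (![x 0, x 1, σ] : E3) := by
      apply continuous_pi
      intro j
      fin_cases j
      · simpa using continuous_const
      · simpa using continuous_const
      · simpa using continuous_id'
    have gcont : Continuous fun σ : ℝ => ρ 0 ![x 0, x 1, σ] :=
      hρ.continuous.comp (continuous_const.prodMk hvec)
    have hFTC : HasDerivAt (fun uu : ℝ => ∫ σ in (0:ℝ)..uu, ρ 0 ![x 0, x 1, σ])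
        (ρ 0 ![x 0, x 1, x 2]) (x 2) := (gcont.integral_hasStrictDerivAt 0 (x 2)).hasDerivAt
    have hlin : HasDerivAt (fun h : ℝ => x 2 + h) 1 0 := by
      simpa using (hasDerivAt_id (0:ℝ)).const_add (x 2)
    have hFTC2 : HasDerivAt (fun h : ℝ => ∫ σ in (0:ℝ)..(x 2 + h), ρ 0 ![x 0, x 1, σ])
        (ρ 0 ![x 0, x 1, x 2] * 1) 0 := by
      have houter : HasDerivAt (fun uu : ℝ => ∫ σ in (0:ℝ)..uu, ρ 0 ![x 0, x 1, σ])
          (ρ 0 ![x 0, x 1, x 2]) ((fun h : ℝ => x 2 + h) 0) := by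
        rw [show (fun h : ℝ => x 2 + h) 0 = x 2 from add_zero (x 2)]
        exact hFTC
      exact HasDerivAt.comp 0 houter hlin
    have h5 := hcomp2.unique hFTC2
    rw [h5, mul_one, hvecx]
  have hdetA₀ : LinearMap.det A₀.toLinearMap = ρ 0 x := by
    rw [← LinearMap.det_toMatrix (Pi.basisFun ℝ (Fin 3))]
    have hM : ∀ i j : Fin 3, (LinearMap.toMatrix (Pi.basisFun ℝ (Fin 3))
        (Pi.basisFun ℝ (Fin 3)) A₀.toLinearMap) i j = A₀ (Pi.single j 1) i := by
      intro i j
      rw [LinearMap.toMatrix_apply, Pi.basisFun_apply]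
      rfl
    rw [Matrix.det_fin_three, hM, hM, hM, hM, hM, hM, hM, hM, hM,
      hr0, hr0, hr0, hr1, hr1, hr1, hent]
    simp [Pi.single_apply]
  -- determinant evolution
  set D : ℝ → ℝ := fun s => (Matrix.of fun i j : Fin 3 => u j s i).det with hDdef
  set cdiv : ℝ → ℝ := fun s => ∑ i, (G s (Pi.single i 1)) i with hcdivdef
  have hD : ∀ s ∈ Icc (0:ℝ) b, HasDerivWithinAt D (cdiv s * D s) (Icc 0 b) s := by
    intro s hs
    have hentry : ∀ i j : Fin 3, HasDerivWithinAt (fun τ => u j τ i)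
        ((G s (u j s)) i) (Icc 0 b) s := fun i j =>
      (ContinuousLinearMap.proj (R := ℝ) (φ := fun _ : Fin 3 => ℝ) i).hasFDerivAt.comp_hasDerivWithinAt
        s (hu j s hs)
    have hdecomp : ∀ w : E3, w = ∑ k, (w k) • (Pi.single k 1 : E3) := by
      intro w
      have h1 : ∀ k, (w k) • (Pi.single k 1 : E3) = Pi.single k (w k) := by
        intro k
        funext m
        simp [Pi.single_apply, mul_ite]
      simp only [h1]
      exact (Finset.univ_sum_single w).symm
    have hrel : ∀ i j : Fin 3, (G s (u j s)) i
        = ∑ k, (G s (Pi.single k 1)) i * (u j s k) := by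
      intro i j
      conv_lhs => rw [hdecomp (u j s)]
      rw [map_sum, Finset.sum_apply]
      apply Finset.sum_congr rfl
      intro k _
      rw [map_smul]
      simp [mul_comm]
    have hmain := det3_deriv (m := fun i j τ => u j τ i)
      (m' := fun i j => (G s (u j s)) i) (S := Icc 0 b) (s := s)
      (fun i j => hentry i j) (fun i k => (G s (Pi.single k 1)) i)
      (fun i j => hrel i j)
    have htr : cdiv s = (G s (Pi.single 0 1)) 0 + (G s (Pi.single 1 1)) 1
        + (G s (Pi.single 2 1)) 2 := by
      rw [hcdivdef]
      simp [Fin.sum_univ_three]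
    rw [hDdef]
    simp only
    rw [htr]
    exact hmain
  -- density along the flow
  set g : ℝ → ℝ := fun s => ρ s (γ s) with hgdef
  set Dρ : ℝ × E3 → (ℝ × E3) →L[ℝ] ℝ :=
    fun p => fderiv ℝ (fun q : ℝ × E3 => ρ q.1 q.2) p with hDρdef
  have hupdate_eq : ∀ (z : E3) (k : Fin 3), Function.update z k (z k) = z := fun z k =>
    Function.update_eq_self k z
  have hρup : ∀ (t : ℝ) (z : E3) (k : Fin 3), HasDerivAt (fun r => ρ t (Function.update z k r))
      (Dρ (t, z) ((0:ℝ), Pi.single k 1)) (z k) := by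
    intro t z k
    have hin : HasDerivAt (fun r => ((t, Function.update z k r) : ℝ × E3))
        (((0:ℝ), Pi.single k 1)) (z k) :=
      (hasDerivAt_const (z k) t).prodMk (hasDerivAt_update z k (z k))
    have houter : HasFDerivAt (fun q : ℝ × E3 => ρ q.1 q.2) (Dρ (t, z))
        ((t, Function.update z k (z k)) : ℝ × E3) := by
      rw [hupdate_eq]
      exact (hρd (t, z)).hasFDerivAt
    exact houter.comp_hasDerivAt (z k) hin
  have hvup : ∀ (t : ℝ) (z : E3) (k : Fin 3), HasDerivAt (fun r => v t (Function.update z k r))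
      (Dv (t, z) (Pi.single k 1)) (z k) := by
    intro t z k
    have houter : HasFDerivAt (v t) (Dv (t, z)) (Function.update z k (z k)) := by
      rw [hupdate_eq]
      exact hvslice t z
    exact houter.comp_hasDerivAt (z k) (hasDerivAt_update z k (z k))
  have hdecomp2 : ∀ w : E3, ((0:ℝ), w) = ∑ k, (w k) • (((0:ℝ), Pi.single k 1) : ℝ × E3) := by
    intro w
    have h1 : ∀ k : Fin 3, (w k) • (((0:ℝ), Pi.single k 1) : ℝ × E3)
        = (((0:ℝ), Pi.single k (w k)) : ℝ × E3) := by
      intro k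
      rw [Prod.smul_mk, smul_zero]
      congr 1
      funext m
      simp [Pi.single_apply, mul_ite]
    rw [Finset.sum_congr rfl (fun k _ => h1 k)]
    refine Prod.ext ?_ ?_
    · rw [Prod.fst_sum]
      simp
    · rw [Prod.snd_sum]
      exact (Finset.univ_sum_single w).symm
  have hdivg_ρv : ∀ (t : ℝ) (z : E3), divg (fun t z => ρ t z • v t z) t z
      = Dρ (t, z) ((0:ℝ), v t z) + ρ t z * (∑ k, (Dv (t, z) (Pi.single k 1)) k) := by
    intro t z
    have hterm : ∀ k : Fin 3,
        deriv (fun r => ρ t (Function.update z k r) * v t (Function.update z k r) k) (z k)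
        = Dρ (t, z) ((0:ℝ), Pi.single k 1) * v t z k
          + ρ t z * (Dv (t, z) (Pi.single k 1)) k := by
      intro k
      have hmul := (hρup t z k).mul ((hasDerivAt_pi.1 (hvup t z k)) k)
      have hmul' : HasDerivAt
          (fun r => ρ t (Function.update z k r) * v t (Function.update z k r) k)
          (Dρ (t, z) ((0:ℝ), Pi.single k 1) * v t z k
            + ρ t z * (Dv (t, z) (Pi.single k 1)) k) (z k) := by
        have h5 : v t (Function.update z k (z k)) k = v t z k := by rw [hupdate_eq]
        have h6 : ρ t (Function.update z k (z k)) = ρ t z := by rw [hupdate_eq]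
        rw [← h5, ← h6]
        exact hmul
      exact hmul'.deriv
    rw [divg]
    have hsummand : ∀ k : Fin 3,
        deriv (fun r => ((fun t z => ρ t z • v t z) t (Function.update z k r)) k) (z k)
        = deriv (fun r => ρ t (Function.update z k r) * v t (Function.update z k r) k) (z k) := by
      intro k
      congr 1
    rw [Finset.sum_congr rfl (fun k _ => (hsummand k).trans (hterm k))]
    have hDρv : Dρ (t, z) ((0:ℝ), v t z) = ∑ k, Dρ (t, z) ((0:ℝ), Pi.single k 1) * v t z k := by
      conv_lhs => rw [hdecomp2 (v t z)]
      rw [map_sum]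
      apply Finset.sum_congr rfl
      intro k _
      rw [map_smul]
      simp [mul_comm]
    rw [hDρv, Finset.sum_add_distrib, Finset.mul_sum]
  have hg : ∀ s, HasDerivAt g (-(cdiv s * g s)) s := by
    intro s
    have h1 : HasDerivAt g (Dρ (s, γ s) ((1:ℝ), v s (γ s))) s :=
      ((hρd (s, γ s)).hasFDerivAt.comp_hasDerivAt s ((hasDerivAt_id s).prodMk (hγ s)) :)
    have hρslice_t : HasDerivAt (fun τ => ρ τ (γ s)) (Dρ (s, γ s) ((1:ℝ), (0:E3))) s :=
      ((hρd (s, γ s)).hasFDerivAt.comp_hasDerivAt s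
        ((hasDerivAt_id s).prodMk (hasDerivAt_const s (γ s))) :)
    have hc := hcont s (γ s)
    rw [hρslice_t.deriv, hdivg_ρv s (γ s)] at hc
    have hsplit : ((1:ℝ), v s (γ s)) = (((1:ℝ), (0:E3)) : ℝ × E3) + ((0:ℝ), v s (γ s)) := by
      rw [Prod.mk_add_mk, add_zero, zero_add]
    have hcd : cdiv s = ∑ k, (Dv (s, γ s) (Pi.single k 1)) k := rfl
    have h2 : Dρ (s, γ s) ((1:ℝ), v s (γ s)) = -(cdiv s * g s) := by
      rw [hsplit, map_add, hcd]
      have hgs : g s = ρ s (γ s) := rfl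
      rw [hgs]
      linarith
    rw [← h2]
    exact h1
  -- g * D is constant
  have hgc2 : Continuous g := Differentiable.continuous (fun s => (hg s).differentiableAt)
  have hPd : ∀ s ∈ Ico (0:ℝ) b, HasDerivWithinAt (fun τ => g τ * D τ) 0 (Ici s) s := by
    intro s hs
    have h1 := ((hg s).hasDerivWithinAt.mul (hasDerivWithinAt_Ici_of_Icc hs (hD s ⟨hs.1, hs.2.le⟩)))
    exact h1.congr_deriv (by ring)
  have hPc : ContinuousOn (fun τ => g τ * D τ) (Icc 0 b) :=
    hgc2.continuousOn.mul (fun s hs => (hD s hs).continuousWithinAt)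
  have hPb := constant_of_has_deriv_right_zero hPc hPd b ⟨hb, le_refl b⟩
  have hD0 : D 0 = 1 := by
    rw [hDdef]
    simp only
    have hWone : (Matrix.of fun i j : Fin 3 => u j 0 i) = 1 := by
      ext i j
      rw [Matrix.of_apply, hu0 j, Matrix.one_apply, Pi.single_apply]
    rw [hWone, Matrix.det_one]
  have hg0 : g 0 = ρ 0 x := by
    rw [hgdef]
    simp only
    rw [show γ (0:ℝ) = x from hinit x]
  have hconst : g b * D b = ρ 0 x := by rw [hPb, hg0, hD0, mul_one]
  -- A ∘ W = A₀
  have hcomp : LinearMap.det A.toLinearMap * D b = ρ 0 x := by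
    have h1 : ∀ j : Fin 3,
        Matrix.toLin' (Matrix.of fun i j : Fin 3 => u j b i) (Pi.single j 1) = u j b := by
      intro j
      rw [Matrix.toLin'_apply, Matrix.mulVec_single]
      funext i
      simp
    have hcompeq : A.toLinearMap ∘ₗ Matrix.toLin' (Matrix.of fun i j : Fin 3 => u j b i)
        = A₀.toLinearMap := by
      apply (Pi.basisFun ℝ (Fin 3)).ext
      intro j
      rw [Pi.basisFun_apply, LinearMap.comp_apply, h1 j]
      exact hAU j
    have h2 := congrArg LinearMap.det hcompeq
    rw [LinearMap.det_comp, LinearMap.det_toLin', hdetA₀] at h2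
    rw [show D b = (Matrix.of fun i j : Fin 3 => u j b i).det from rfl]
    exact h2
  -- conclude
  have hDb : D b ≠ 0 := by
    intro h0
    rw [h0, mul_zero] at hconst
    exact absurd hconst.symm (ne_of_gt (hρpos 0 x))
  have hfinal : LinearMap.det A.toLinearMap = g b :=
    mul_right_cancel₀ hDb (hcomp.trans hconst.symm)
  show jacDet (y b) (γ b) = ρ b (γ b)
  rw [jacDet, ← hAdef, hfinal, hgdef]


lemma divg_neg (w : ℝ → E3 → E3) (t : ℝ) (z : E3) :
    divg (fun t z => -(w t z)) t z = -(divg w t z) := by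
  rw [divg, divg, ← Finset.sum_neg_distrib]
  apply Finset.sum_congr rfl
  intro k _
  rw [show (fun s => (fun t z => -(w t z)) t (Function.update z k s) k)
      = fun s => -(w t (Function.update z k s) k) from rfl]
  rw [deriv.fun_neg]


/-- with y₀(x) = (x₁, x₂, ∫₀^{x₃} ρ(0,x₁,x₂,σ)dσ), the Jacobian determinant
of the Lagrangian transformation equals the density: det(∂y/∂x)(t,z) = ρ(t,z). -/
theorem lagrangian_jacobian_eq_density (ρ : ℝ → (Fin 3 → ℝ) → ℝ)
    (v : ℝ → (Fin 3 → ℝ) → (Fin 3 → ℝ)) (Φ : ℝ → (Fin 3 → ℝ) → (Fin 3 → ℝ))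
    (y : ℝ → (Fin 3 → ℝ) → (Fin 3 → ℝ))
    (hρ : ContDiff ℝ 1 (fun q : ℝ × (Fin 3 → ℝ) => ρ q.1 q.2))
    (hρpos : ∀ t z, 0 < ρ t z)
    (hv : ContDiff ℝ 1 (fun q : ℝ × (Fin 3 → ℝ) => v q.1 q.2))
    (hflow : ∀ t x, HasDerivAt (fun s => Φ s x) (v t (Φ t x)) t)
    (hinit : ∀ x, Φ 0 x = x)
    (hcont : ∀ t z, deriv (fun s => ρ s z) t
      + divg (fun t z => ρ t z • v t z) t z = 0)
    (hy : ContDiff ℝ 1 (fun q : ℝ × (Fin 3 → ℝ) => y q.1 q.2))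
    (hlag : ∀ t x, y t (Φ t x)
      = ![x 0, x 1, ∫ σ in (0 : ℝ)..(x 2), ρ 0 ![x 0, x 1, σ]]) :
    ∀ t, ∀ z ∈ Set.range (Φ t), jacDet (y t) z = ρ t z := by
  intro t
  rcases le_or_gt 0 t with ht | ht
  · exact main_nonneg ρ v Φ y hρ hρpos hv hflow hinit hcont hy hlag t ht
  · have hmap : ContDiff ℝ 1 (fun q : ℝ × E3 => ((-q.1, q.2) : ℝ × E3)) :=
      (contDiff_fst.neg).prodMk contDiff_snd
    have hρ' : ContDiff ℝ 1 (fun q : ℝ × E3 => ρ (-q.1) q.2) := hρ.comp hmap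
    have hv' : ContDiff ℝ 1 (fun q : ℝ × E3 => -(v (-q.1) q.2)) := (hv.comp hmap).neg
    have hy' : ContDiff ℝ 1 (fun q : ℝ × E3 => y (-q.1) q.2) := hy.comp hmap
    have hflow' : ∀ (t : ℝ) (x : E3),
        HasDerivAt (fun s => Φ (-s) x) (-(v (-t) (Φ (-t) x))) t := by
      intro t x
      have h1 := ((hflow (-t) x).scomp t (hasDerivAt_neg t))
      simp at h1
      exact h1
    have hinit' : ∀ x : E3, Φ (-(0:ℝ)) x = x := fun x => by rw [neg_zero]; exact hinit x
    have hcont' : ∀ (t : ℝ) (z : E3), deriv (fun s => ρ (-s) z) t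
        + divg (fun t z => ρ (-t) z • -(v (-t) z)) t z = 0 := by
      intro t z
      have h1 : deriv (fun s => ρ (-s) z) t = -deriv (fun s => ρ s z) (-t) :=
        deriv_comp_neg (fun s => ρ s z) t
      have h2 : (fun (t : ℝ) (z : E3) => ρ (-t) z • -(v (-t) z))
          = fun (t : ℝ) (z : E3) => -(ρ (-t) z • v (-t) z) := by
        funext t z
        rw [smul_neg]
      rw [h1, h2, divg_neg (fun t z => ρ (-t) z • v (-t) z) t z]
      have h3 : divg (fun t z => ρ (-t) z • v (-t) z) t z
          = divg (fun t z => ρ t z • v t z) (-t) z := rfl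
      rw [h3]
      have h4 := hcont (-t) z
      linarith
    have hlag' : ∀ (t : ℝ) (x : E3), y (-t) (Φ (-t) x)
        = ![x 0, x 1, ∫ σ in (0:ℝ)..(x 2), ρ (-(0:ℝ)) ![x 0, x 1, σ]] := by
      intro t x
      rw [neg_zero]
      exact hlag (-t) x
    have hneg := main_nonneg (fun s z => ρ (-s) z) (fun s z => -(v (-s) z))
      (fun s => Φ (-s)) (fun s => y (-s))
      hρ' (fun t z => hρpos (-t) z) hv' hflow' hinit' hcont' hy' hlag' (-t) (by linarith)
    intro z hz
    have hz' : z ∈ Set.range (Φ (-(-t))) := by rwa [neg_neg]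
    have := hneg z hz'
    simp only [neg_neg] at this
    exact this
end
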